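/- There is a constant c such that the following holds: for every transition system S and every cPLTL_G formula φ, if S does not satisfy φ with respect to every variable valuation, then there is a valuation α with α(z) ≤ 2^{c·|φ|} · |S| · W for every variable z such that S does not satisfy φ with respect to α, where |S| is the number of states of S and W is the maximal cost occurring in S (i.e., a violating valuation exists that is bounded exponentially in the size of φ and linearly in the number of states and the maximal cost). -/

import Mathlib

/-- A cost-trace: an infinite sequence of sets of atomic propositions interleaved
with natural-number costs. -/
structure Trace (P : Type) where
  state : ℕ → Set P
  cost : ℕ → ℕ

/-- The requirement that the distinguished proposition `κ` holds at a position iff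
the last step had non-zero cost. -/
def Trace.Valid {P : Type} (κ : P) (w : Trace P) : Prop :=
  ∀ n, 0 < w.cost n ↔ κ ∈ w.state (n + 1)

/-- The cost of the finite infix `wₙ cₙ ⋯ c_{n+j-1} w_{n+j}`. -/
def Trace.cst {P : Type} (w : Trace P) (n j : ℕ) : ℕ :=
  ∑ i ∈ Finset.range j, w.cost (n + i)
/-- Formulas of cPLTL in negation normal form. -/
inductive CPLTL (P : Type) (Var : Type) where
  | pos : P → CPLTL P Var
  | nneg : P → CPLTL P Var
  | conj : CPLTL P Var → CPLTL P Var → CPLTL P Var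
  | disj : CPLTL P Var → CPLTL P Var → CPLTL P Var
  | next : CPLTL P Var → CPLTL P Var
  | until_ : CPLTL P Var → CPLTL P Var → CPLTL P Var
  | release : CPLTL P Var → CPLTL P Var → CPLTL P Var
  | fleq : Var → CPLTL P Var → CPLTL P Var
  | gleq : Var → CPLTL P Var → CPLTL P Var

namespace CPLTL

variable {P Var : Type}

/-- The satisfaction relation `(w, n, α) ⊨ φ`. -/
def Sat (w : Trace P) (α : Var → ℕ) : ℕ → CPLTL P Var → Prop
  | n, pos p => p ∈ w.state n
  | n, nneg p => p ∉ w.state n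
  | n, conj φ ψ => Sat w α n φ ∧ Sat w α n ψ
  | n, disj φ ψ => Sat w α n φ ∨ Sat w α n ψ
  | n, next φ => Sat w α (n + 1) φ
  | n, until_ φ ψ => ∃ j, Sat w α (n + j) ψ ∧ ∀ k, k < j → Sat w α (n + k) φ
  | n, release φ ψ => ∀ j, Sat w α (n + j) ψ ∨ ∃ k, k < j ∧ Sat w α (n + k) φ
  | n, fleq z φ => ∃ j, w.cst n j ≤ α z ∧ Sat w α (n + j) φ
  | n, gleq z φ => ∀ j, w.cst n j ≤ α z → Sat w α (n + j) φ

/-- The variables parameterizing eventually operators. -/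
def varF : CPLTL P Var → Set Var
  | pos _ => ∅
  | nneg _ => ∅
  | conj φ ψ => varF φ ∪ varF ψ
  | disj φ ψ => varF φ ∪ varF ψ
  | next φ => varF φ
  | until_ φ ψ => varF φ ∪ varF ψ
  | release φ ψ => varF φ ∪ varF ψ
  | fleq z φ => insert z (varF φ)
  | gleq _ φ => varF φ

/-- The variables parameterizing always operators. -/
def varG : CPLTL P Var → Set Var
  | pos _ => ∅
  | nneg _ => ∅
  | conj φ ψ => varG φ ∪ varG ψ
  | disj φ ψ => varG φ ∪ varG ψ
  | next φ => varG φ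
  | until_ φ ψ => varG φ ∪ varG ψ
  | release φ ψ => varG φ ∪ varG ψ
  | fleq _ φ => varG φ
  | gleq z φ => insert z (varG φ)

/-- The set of subformulas of a formula. -/
def cl : CPLTL P Var → Set (CPLTL P Var)
  | pos p => {pos p}
  | nneg p => {nneg p}
  | conj φ ψ => insert (conj φ ψ) (cl φ ∪ cl ψ)
  | disj φ ψ => insert (disj φ ψ) (cl φ ∪ cl ψ)
  | next φ => insert (next φ) (cl φ)
  | until_ φ ψ => insert (until_ φ ψ) (cl φ ∪ cl ψ)
  | release φ ψ => insert (release φ ψ) (cl φ ∪ cl ψ)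
  | fleq z φ => insert (fleq z φ) (cl φ)
  | gleq z φ => insert (gleq z φ) (cl φ)

/-- The size of a formula: the number of its subformulas. -/
noncomputable def size (φ : CPLTL P Var) : ℕ := (cl φ).ncard

/-- The negation of a formula, defined via the dualities of the operators. -/
def negate : CPLTL P Var → CPLTL P Var
  | pos p => nneg p
  | nneg p => pos p
  | conj φ ψ => disj (negate φ) (negate ψ)
  | disj φ ψ => conj (negate φ) (negate ψ)
  | next φ => next (negate φ)
  | until_ φ ψ => release (negate φ) (negate ψ)
  | release φ ψ => until_ (negate φ) (negate ψ)
  | fleq z φ => gleq z (negate φ)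
  | gleq z φ => fleq z (negate φ)

/-- A formula is well-formed if no variable parameterizes both an eventually and
an always operator. -/
def WellFormed (φ : CPLTL P Var) : Prop := varF φ ∩ varG φ = ∅

/-- LTL formulas: no parameterized operators. -/
def IsLTL (φ : CPLTL P Var) : Prop := varF φ = ∅ ∧ varG φ = ∅

/-- cPLTL_F formulas: no parameterized always operators. -/
def IsF (φ : CPLTL P Var) : Prop := varG φ = ∅

/-- cPLTL_G formulas: no parameterized eventually operators. -/
def IsG (φ : CPLTL P Var) : Prop := varF φ = ∅

end CPLTL
/-- A transition system with costs: a finite directed graph in which every state has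
a successor, with an initial state, a labeling by sets of atomic propositions, and a
cost function on edges, such that the distinguished proposition `κ` holds at a state
iff every incoming edge has non-zero cost. -/
structure TransSys (P : Type) (κ : P) (S : Type) where
  init : S
  edge : S → S → Prop
  succ : ∀ s, ∃ s', edge s s'
  label : S → Set P
  cost : S → S → ℕ
  kappa_spec : ∀ s s', edge s s' → (0 < cost s s' ↔ κ ∈ label s')

namespace TransSys

variable {P S : Type} {κ : P}

/-- The cost-trace of a path through the transition system. -/
def traceOf (T : TransSys P κ S) (π : ℕ → S) : Trace P :=
  ⟨fun n => T.label (π n), fun n => T.cost (π n) (π (n + 1))⟩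

/-- `T` satisfies `φ` with respect to `α` if the trace of every path through `T`
satisfies `φ` with respect to `α`. -/
def Satisfies {Var : Type} (T : TransSys P κ S) (φ : CPLTL P Var) (α : Var → ℕ) : Prop :=
  ∀ π : ℕ → S, π 0 = T.init → (∀ n, T.edge (π n) (π (n + 1))) →
    CPLTL.Sat (T.traceOf π) α 0 φ

/-- The maximal cost occurring in the transition system. -/
noncomputable def maxCost (T : TransSys P κ S) : ℕ :=
  sSup {c | ∃ s s', T.edge s s' ∧ T.cost s s' = c}

end TransSys

namespace CPLTL

variable {P Var : Type}

/-- Unparameterized (infinite-budget) satisfaction. -/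
def SatInf (w : Trace P) : ℕ → CPLTL P Var → Prop
  | n, pos p => p ∈ w.state n
  | n, nneg p => p ∉ w.state n
  | n, conj φ ψ => SatInf w n φ ∧ SatInf w n ψ
  | n, disj φ ψ => SatInf w n φ ∨ SatInf w n ψ
  | n, next φ => SatInf w (n + 1) φ
  | n, until_ φ ψ => ∃ j, SatInf w (n + j) ψ ∧ ∀ k, k < j → SatInf w (n + k) φ
  | n, release φ ψ => ∀ j, SatInf w (n + j) ψ ∨ ∃ k, k < j ∧ SatInf w (n + k) φ
  | n, fleq _ φ => ∃ j, SatInf w (n + j) φ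
  | n, gleq _ φ => ∀ j, SatInf w (n + j) φ

lemma self_mem_cl (φ : CPLTL P Var) : φ ∈ cl φ := by
  cases φ <;> simp [cl]

lemma cl_trans : ∀ (ψ χ : CPLTL P Var), χ ∈ cl ψ → cl χ ⊆ cl ψ := by
  intro ψ
  induction ψ with
  | pos p => intro χ h; simp [cl] at h; subst h; exact subset_rfl
  | nneg p => intro χ h; simp [cl] at h; subst h; exact subset_rfl
  | conj φ₁ φ₂ ih₁ ih₂ =>
    intro χ h
    rcases Set.mem_insert_iff.mp h with h | h
    · subst h; exact subset_rfl
    · rcases h with h | h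
      · exact (ih₁ χ h).trans ((Set.subset_union_left).trans (Set.subset_insert _ _))
      · exact (ih₂ χ h).trans ((Set.subset_union_right).trans (Set.subset_insert _ _))
  | disj φ₁ φ₂ ih₁ ih₂ =>
    intro χ h
    rcases Set.mem_insert_iff.mp h with h | h
    · subst h; exact subset_rfl
    · rcases h with h | h
      · exact (ih₁ χ h).trans ((Set.subset_union_left).trans (Set.subset_insert _ _))
      · exact (ih₂ χ h).trans ((Set.subset_union_right).trans (Set.subset_insert _ _))
  | next φ₁ ih₁ =>
    intro χ h
    rcases Set.mem_insert_iff.mp h with h | h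
    · subst h; exact subset_rfl
    · exact (ih₁ χ h).trans (Set.subset_insert _ _)
  | until_ φ₁ φ₂ ih₁ ih₂ =>
    intro χ h
    rcases Set.mem_insert_iff.mp h with h | h
    · subst h; exact subset_rfl
    · rcases h with h | h
      · exact (ih₁ χ h).trans ((Set.subset_union_left).trans (Set.subset_insert _ _))
      · exact (ih₂ χ h).trans ((Set.subset_union_right).trans (Set.subset_insert _ _))
  | release φ₁ φ₂ ih₁ ih₂ =>
    intro χ h
    rcases Set.mem_insert_iff.mp h with h | h
    · subst h; exact subset_rfl
    · rcases h with h | h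
      · exact (ih₁ χ h).trans ((Set.subset_union_left).trans (Set.subset_insert _ _))
      · exact (ih₂ χ h).trans ((Set.subset_union_right).trans (Set.subset_insert _ _))
  | fleq z φ₁ ih₁ =>
    intro χ h
    rcases Set.mem_insert_iff.mp h with h | h
    · subst h; exact subset_rfl
    · exact (ih₁ χ h).trans (Set.subset_insert _ _)
  | gleq z φ₁ ih₁ =>
    intro χ h
    rcases Set.mem_insert_iff.mp h with h | h
    · subst h; exact subset_rfl
    · exact (ih₁ χ h).trans (Set.subset_insert _ _)

lemma cl_finite (φ : CPLTL P Var) : (cl φ).Finite := by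
  induction φ with
  | pos p => exact Set.finite_singleton _
  | nneg p => exact Set.finite_singleton _
  | conj φ₁ φ₂ ih₁ ih₂ => exact (ih₁.union ih₂).insert _
  | disj φ₁ φ₂ ih₁ ih₂ => exact (ih₁.union ih₂).insert _
  | next φ₁ ih₁ => exact ih₁.insert _
  | until_ φ₁ φ₂ ih₁ ih₂ => exact (ih₁.union ih₂).insert _
  | release φ₁ φ₂ ih₁ ih₂ => exact (ih₁.union ih₂).insert _
  | fleq z φ₁ ih₁ => exact ih₁.insert _
  | gleq z φ₁ ih₁ => exact ih₁.insert _

lemma size_pos (φ : CPLTL P Var) : 1 ≤ size φ := by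
  rw [size]
  exact (Set.ncard_pos (cl_finite φ)).mpr ⟨φ, self_mem_cl φ⟩

lemma negate_negate (φ : CPLTL P Var) : negate (negate φ) = φ := by
  induction φ <;> simp [negate, *]

lemma varG_negate (φ : CPLTL P Var) : varG (negate φ) = varF φ := by
  induction φ <;> simp [negate, varG, varF, *]

lemma cl_negate (φ : CPLTL P Var) : cl (negate φ) = negate '' cl φ := by
  induction φ <;>
    simp [negate, cl, Set.image_insert_eq, Set.image_union, Set.image_singleton, *]

lemma size_negate (φ : CPLTL P Var) : size (negate φ) = size φ := by
  rw [size, cl_negate,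
    Set.ncard_image_of_injective _ (Function.Involutive.injective negate_negate), size]

end CPLTL

namespace CPLTL

variable {P Var : Type}

lemma sat_negate (w : Trace P) (α : Var → ℕ) :
    ∀ (φ : CPLTL P Var) (n : ℕ), Sat w α n (negate φ) ↔ ¬ Sat w α n φ := by
  intro φ
  induction φ with
  | pos p => intro n; simp [negate, Sat]
  | nneg p => intro n; simp [negate, Sat]
  | conj φ₁ φ₂ ih₁ ih₂ => intro n; simp only [negate, Sat, ih₁, ih₂]; tauto
  | disj φ₁ φ₂ ih₁ ih₂ => intro n; simp only [negate, Sat, ih₁, ih₂]; tauto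
  | next φ₁ ih₁ => intro n; simp only [negate, Sat, ih₁]
  | until_ φ₁ φ₂ ih₁ ih₂ =>
    intro n
    simp only [negate, Sat, ih₁, ih₂]
    constructor
    · rintro h ⟨j, h2, h1⟩
      rcases h j with h' | ⟨k, hk, h'⟩
      · exact h' h2
      · exact h' (h1 k hk)
    · intro h j
      by_cases h2 : Sat w α (n + j) φ₂
      · right
        by_contra hno
        push_neg at hno
        exact h ⟨j, h2, fun k hk => hno k hk⟩
      · exact Or.inl h2
  | release φ₁ φ₂ ih₁ ih₂ =>
    intro n
    simp only [negate, Sat, ih₁, ih₂]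
    constructor
    · rintro ⟨j, h2, h1⟩ h
      rcases h j with h' | ⟨k, hk, h'⟩
      · exact h2 h'
      · exact h1 k hk h'
    · intro h
      by_contra hno
      push_neg at hno
      apply h
      intro j
      by_cases h2 : Sat w α (n + j) φ₂
      · exact Or.inl h2
      · obtain ⟨k, hk, h1⟩ := hno j h2
        exact Or.inr ⟨k, hk, h1⟩
  | fleq z φ₁ ih₁ =>
    intro n
    simp only [negate, Sat, ih₁]
    push_neg
    rfl
  | gleq z φ₁ ih₁ =>
    intro n
    simp only [negate, Sat, ih₁]
    push_neg
    rfl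

lemma sat_to_satInf (w : Trace P) (α : Var → ℕ) :
    ∀ (φ : CPLTL P Var), varG φ = ∅ → ∀ n, Sat w α n φ → SatInf w n φ := by
  intro φ
  induction φ with
  | pos p => intro _ n h; exact h
  | nneg p => intro _ n h; exact h
  | conj φ₁ φ₂ ih₁ ih₂ =>
    intro hG n h
    rw [varG, Set.union_empty_iff] at hG
    exact ⟨ih₁ hG.1 n h.1, ih₂ hG.2 n h.2⟩
  | disj φ₁ φ₂ ih₁ ih₂ =>
    intro hG n h
    rw [varG, Set.union_empty_iff] at hG
    exact h.imp (ih₁ hG.1 n) (ih₂ hG.2 n)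
  | next φ₁ ih₁ =>
    intro hG n h
    rw [varG] at hG
    exact ih₁ hG (n + 1) h
  | until_ φ₁ φ₂ ih₁ ih₂ =>
    intro hG n h
    rw [varG, Set.union_empty_iff] at hG
    obtain ⟨j, h2, h1⟩ := h
    exact ⟨j, ih₂ hG.2 _ h2, fun k hk => ih₁ hG.1 _ (h1 k hk)⟩
  | release φ₁ φ₂ ih₁ ih₂ =>
    intro hG n h
    rw [varG, Set.union_empty_iff] at hG
    intro j
    rcases h j with h2 | ⟨k, hk, h1⟩
    · exact Or.inl (ih₂ hG.2 _ h2)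
    · exact Or.inr ⟨k, hk, ih₁ hG.1 _ h1⟩
  | fleq z φ₁ ih₁ =>
    intro hG n h
    rw [varG] at hG
    obtain ⟨j, _, h1⟩ := h
    exact ⟨j, ih₁ hG _ h1⟩
  | gleq z φ₁ ih₁ =>
    intro hG
    rw [varG] at hG
    exact absurd hG (Set.insert_nonempty _ _).ne_empty

lemma satInf_congr (w : Trace P) (m m' : ℕ)
    (hs : ∀ i, w.state (m + i) = w.state (m' + i)) :
    ∀ (φ : CPLTL P Var) (n : ℕ), SatInf w (m + n) φ ↔ SatInf w (m' + n) φ := by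
  intro φ
  induction φ with
  | pos p => intro n; simp only [SatInf]; rw [hs n]
  | nneg p => intro n; simp only [SatInf]; rw [hs n]
  | conj φ₁ φ₂ ih₁ ih₂ => intro n; simp only [SatInf, ih₁ n, ih₂ n]
  | disj φ₁ φ₂ ih₁ ih₂ => intro n; simp only [SatInf, ih₁ n, ih₂ n]
  | next φ₁ ih₁ =>
    intro n
    simp only [SatInf]
    rw [add_assoc, add_assoc]
    exact ih₁ (n + 1)
  | until_ φ₁ φ₂ ih₁ ih₂ =>
    intro n
    simp only [SatInf]
    constructor
    · rintro ⟨j, h2, h1⟩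
      refine ⟨j, ?_, fun k hk => ?_⟩
      · rw [add_assoc] at h2 ⊢; exact (ih₂ (n + j)).mp h2
      · rw [add_assoc]; exact (ih₁ (n + k)).mp (by rw [← add_assoc]; exact h1 k hk)
    · rintro ⟨j, h2, h1⟩
      refine ⟨j, ?_, fun k hk => ?_⟩
      · rw [add_assoc] at h2 ⊢; exact (ih₂ (n + j)).mpr h2
      · rw [add_assoc]; exact (ih₁ (n + k)).mpr (by rw [← add_assoc]; exact h1 k hk)
  | release φ₁ φ₂ ih₁ ih₂ =>
    intro n
    simp only [SatInf]
    constructor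
    · intro h j
      rcases h j with h2 | ⟨k, hk, h1⟩
      · left; rw [add_assoc] at h2 ⊢; exact (ih₂ (n + j)).mp h2
      · right; exact ⟨k, hk, by rw [add_assoc]; exact (ih₁ (n + k)).mp (by rw [← add_assoc]; exact h1)⟩
    · intro h j
      rcases h j with h2 | ⟨k, hk, h1⟩
      · left; rw [add_assoc] at h2 ⊢; exact (ih₂ (n + j)).mpr h2
      · right; exact ⟨k, hk, by rw [add_assoc]; exact (ih₁ (n + k)).mpr (by rw [← add_assoc]; exact h1)⟩
  | fleq z φ₁ ih₁ =>
    intro n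
    simp only [SatInf]
    constructor
    · rintro ⟨j, h1⟩
      exact ⟨j, by rw [add_assoc] at h1 ⊢; exact (ih₁ (n + j)).mp h1⟩
    · rintro ⟨j, h1⟩
      exact ⟨j, by rw [add_assoc] at h1 ⊢; exact (ih₁ (n + j)).mpr h1⟩
  | gleq z φ₁ ih₁ =>
    intro n
    simp only [SatInf]
    constructor
    · intro h j
      rw [add_assoc]
      exact (ih₁ (n + j)).mp (by rw [← add_assoc]; exact h j)
    · intro h j
      rw [add_assoc]
      exact (ih₁ (n + j)).mpr (by rw [← add_assoc]; exact h j)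

lemma satInf_until_iff (w : Trace P) (φ₁ φ₂ : CPLTL P Var) (n : ℕ) :
    SatInf w n (until_ φ₁ φ₂) ↔
      SatInf w n φ₂ ∨ (SatInf w n φ₁ ∧ SatInf w (n + 1) (until_ φ₁ φ₂)) := by
  simp only [SatInf]
  constructor
  · rintro ⟨j, h2, h1⟩
    cases j with
    | zero => left; simpa using h2
    | succ k =>
      right
      refine ⟨by simpa using h1 0 (Nat.succ_pos k), k, ?_, fun k' hk' => ?_⟩
      · have h : n + (k + 1) = n + 1 + k := by omega
        rwa [h] at h2
      · have h : n + 1 + k' = n + (k' + 1) := by omega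
        rw [h]
        exact h1 (k' + 1) (by omega)
  · rintro (h2 | ⟨h1, j, h2, h1'⟩)
    · exact ⟨0, by simpa using h2, by omega⟩
    · refine ⟨j + 1, by rw [show n + (j + 1) = n + 1 + j by omega]; exact h2, fun k hk => ?_⟩
      cases k with
      | zero => simpa using h1
      | succ k' =>
        rw [show n + (k' + 1) = n + 1 + k' by omega]
        exact h1' k' (by omega)

lemma satInf_release_iff (w : Trace P) (φ₁ φ₂ : CPLTL P Var) (n : ℕ) :
    SatInf w n (release φ₁ φ₂) ↔
      SatInf w n φ₂ ∧ (SatInf w n φ₁ ∨ SatInf w (n + 1) (release φ₁ φ₂)) := by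
  simp only [SatInf]
  constructor
  · intro h
    have h2 : SatInf w n φ₂ := by simpa using (h 0).resolve_right (by rintro ⟨k, hk, -⟩; omega)
    refine ⟨h2, ?_⟩
    by_cases h1 : SatInf w n φ₁
    · exact Or.inl h1
    · right
      intro j
      rcases h (j + 1) with h2' | ⟨k, hk, h1'⟩
      · left; rwa [show n + (j + 1) = n + 1 + j by omega] at h2'
      · cases k with
        | zero => exact absurd (by simpa using h1') h1
        | succ k' =>
          right
          exact ⟨k', by omega, by rwa [show n + (k' + 1) = n + 1 + k' by omega] at h1'⟩
  · rintro ⟨h2, h⟩ j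
    cases j with
    | zero => left; simpa using h2
    | succ k =>
      rcases h with h1 | hrel
      · right; exact ⟨0, Nat.succ_pos k, by simpa using h1⟩
      · rcases hrel k with h2' | ⟨k', hk', h1'⟩
        · left; rwa [show n + 1 + k = n + (k + 1) by omega] at h2'
        · right
          exact ⟨k' + 1, by omega, by rwa [show n + 1 + k' = n + (k' + 1) by omega] at h1'⟩

lemma satInf_fleq_iff (w : Trace P) (z : Var) (φ₁ : CPLTL P Var) (n : ℕ) :
    SatInf w n (fleq z φ₁) ↔ SatInf w n φ₁ ∨ SatInf w (n + 1) (fleq z φ₁) := by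
  simp only [SatInf]
  constructor
  · rintro ⟨j, h1⟩
    cases j with
    | zero => left; simpa using h1
    | succ k => right; exact ⟨k, by rwa [show n + 1 + k = n + (k + 1) by omega]⟩
  · rintro (h1 | ⟨j, h1⟩)
    · exact ⟨0, by simpa using h1⟩
    · exact ⟨j + 1, by rwa [show n + (j + 1) = n + 1 + j by omega]⟩

end CPLTL

open CPLTL in
/-- Transferring unparameterized satisfaction along a "jumping" reparameterization
`σ` of a path. -/
lemma transfer_satInf {P Var S : Type} {κ : P} (T : TransSys P κ S) (π : ℕ → S)
    (ψ : CPLTL P Var) (σ : ℕ → ℕ)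
    (hagree : ∀ n, ∀ χ ∈ cl ψ,
      (SatInf (T.traceOf π) (σ (n + 1)) χ ↔ SatInf (T.traceOf π) (σ n + 1) χ))
    (hfulU : ∀ φ₁ φ₂ : CPLTL P Var, until_ φ₁ φ₂ ∈ cl ψ → ∀ n,
      SatInf (T.traceOf π) (σ n) (until_ φ₁ φ₂) →
      ∃ j, SatInf (T.traceOf π) (σ (n + j)) φ₂ ∧
        ∀ k, k < j → SatInf (T.traceOf π) (σ (n + k)) φ₁)
    (hfulF : ∀ (z : Var) (φ₁ : CPLTL P Var), fleq z φ₁ ∈ cl ψ → ∀ n,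
      SatInf (T.traceOf π) (σ n) (fleq z φ₁) →
      ∃ j, SatInf (T.traceOf π) (σ (n + j)) φ₁) :
    ∀ χ : CPLTL P Var, cl χ ⊆ cl ψ → varG χ = ∅ → ∀ n,
      SatInf (T.traceOf π) (σ n) χ → SatInf (T.traceOf (π ∘ σ)) n χ := by
  set w := T.traceOf π with hw
  intro χ
  induction χ with
  | pos p => intro _ _ n h; exact h
  | nneg p => intro _ _ n h; exact h
  | conj φ₁ φ₂ ih₁ ih₂ =>
    intro hsub hG n h
    rw [varG, Set.union_empty_iff] at hG
    have hsub₁ : cl φ₁ ⊆ cl ψ :=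
      (Set.subset_union_left.trans (Set.subset_insert _ _)).trans hsub
    have hsub₂ : cl φ₂ ⊆ cl ψ :=
      (Set.subset_union_right.trans (Set.subset_insert _ _)).trans hsub
    exact ⟨ih₁ hsub₁ hG.1 n h.1, ih₂ hsub₂ hG.2 n h.2⟩
  | disj φ₁ φ₂ ih₁ ih₂ =>
    intro hsub hG n h
    rw [varG, Set.union_empty_iff] at hG
    have hsub₁ : cl φ₁ ⊆ cl ψ :=
      (Set.subset_union_left.trans (Set.subset_insert _ _)).trans hsub
    have hsub₂ : cl φ₂ ⊆ cl ψ :=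
      (Set.subset_union_right.trans (Set.subset_insert _ _)).trans hsub
    exact h.imp (ih₁ hsub₁ hG.1 n) (ih₂ hsub₂ hG.2 n)
  | next φ₁ ih₁ =>
    intro hsub hG n h
    rw [varG] at hG
    have hsub₁ : cl φ₁ ⊆ cl ψ := (Set.subset_insert _ _).trans hsub
    have hmem : φ₁ ∈ cl ψ := hsub₁ (self_mem_cl φ₁)
    have h' : SatInf w (σ n + 1) φ₁ := h
    exact ih₁ hsub₁ hG (n + 1) ((hagree n φ₁ hmem).mpr h')
  | until_ φ₁ φ₂ ih₁ ih₂ =>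
    intro hsub hG n h
    rw [varG, Set.union_empty_iff] at hG
    have hsub₁ : cl φ₁ ⊆ cl ψ :=
      (Set.subset_union_left.trans (Set.subset_insert _ _)).trans hsub
    have hsub₂ : cl φ₂ ⊆ cl ψ :=
      (Set.subset_union_right.trans (Set.subset_insert _ _)).trans hsub
    obtain ⟨j, h2, h1⟩ := hfulU φ₁ φ₂ (hsub (self_mem_cl _)) n h
    exact ⟨j, ih₂ hsub₂ hG.2 (n + j) h2, fun k hk => ih₁ hsub₁ hG.1 (n + k) (h1 k hk)⟩
  | release φ₁ φ₂ ih₁ ih₂ =>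
    intro hsub hG n h
    rw [varG, Set.union_empty_iff] at hG
    have hsub₁ : cl φ₁ ⊆ cl ψ :=
      (Set.subset_union_left.trans (Set.subset_insert _ _)).trans hsub
    have hsub₂ : cl φ₂ ⊆ cl ψ :=
      (Set.subset_union_right.trans (Set.subset_insert _ _)).trans hsub
    have hmem : release φ₁ φ₂ ∈ cl ψ := hsub (self_mem_cl _)
    have key : ∀ j n', SatInf w (σ n') (release φ₁ φ₂) →
        SatInf w (σ (n' + j)) φ₂ ∨ ∃ k, k < j ∧ SatInf w (σ (n' + k)) φ₁ := by
      intro j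
      induction j with
      | zero =>
        intro n' hrel
        rw [satInf_release_iff] at hrel
        left
        simpa using hrel.1
      | succ j ihj =>
        intro n' hrel
        rw [satInf_release_iff] at hrel
        rcases hrel.2 with h1 | hrel'
        · right; exact ⟨0, Nat.succ_pos j, by simpa using h1⟩
        · have hrel'' : SatInf w (σ (n' + 1)) (release φ₁ φ₂) :=
            (hagree n' _ hmem).mpr hrel'
          rcases ihj (n' + 1) hrel'' with h2 | ⟨k, hk, h1⟩
          · left; rwa [show n' + 1 + j = n' + (j + 1) by omega] at h2
          · right
            exact ⟨k + 1, by omega, by rwa [show n' + 1 + k = n' + (k + 1) by omega] at h1⟩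
    intro j
    rcases key j n h with h2 | ⟨k, hk, h1⟩
    · exact Or.inl (ih₂ hsub₂ hG.2 (n + j) h2)
    · exact Or.inr ⟨k, hk, ih₁ hsub₁ hG.1 (n + k) h1⟩
  | fleq z φ₁ ih₁ =>
    intro hsub hG n h
    rw [varG] at hG
    have hsub₁ : cl φ₁ ⊆ cl ψ := (Set.subset_insert _ _).trans hsub
    obtain ⟨j, h1⟩ := hfulF z φ₁ (hsub (self_mem_cl _)) n h
    exact ⟨j, ih₁ hsub₁ hG (n + j) h1⟩
  | gleq z φ₁ ih₁ =>
    intro _ hG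
    rw [varG] at hG
    exact absurd hG (Set.insert_nonempty _ _).ne_empty

open CPLTL in
/-- If the looping part of `σ` fulfills all eventualities active at the start of
the loop, then every `until` active anywhere along `σ` is fulfilled along `σ`. -/
lemma derive_fulU {P Var S : Type} {κ : P} (T : TransSys P κ S) (π : ℕ → S)
    (ψ : CPLTL P Var) (σ : ℕ → ℕ) (q p : ℕ) (hp : 0 < p)
    (hagree : ∀ n, ∀ χ ∈ cl ψ,
      (SatInf (T.traceOf π) (σ (n + 1)) χ ↔ SatInf (T.traceOf π) (σ n + 1) χ))
    (halign : ∀ n, ∃ j, ∀ i, i < p → σ (n + j + i) = σ (q + i))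
    (hloop : ∀ φ₁ φ₂ : CPLTL P Var, until_ φ₁ φ₂ ∈ cl ψ →
      SatInf (T.traceOf π) (σ q) (until_ φ₁ φ₂) →
      ∃ i, i < p ∧ SatInf (T.traceOf π) (σ (q + i)) φ₂) :
    ∀ φ₁ φ₂ : CPLTL P Var, until_ φ₁ φ₂ ∈ cl ψ → ∀ n,
      SatInf (T.traceOf π) (σ n) (until_ φ₁ φ₂) →
      ∃ j, SatInf (T.traceOf π) (σ (n + j)) φ₂ ∧
        ∀ k, k < j → SatInf (T.traceOf π) (σ (n + k)) φ₁ := by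
  set w := T.traceOf π with hw
  intro φ₁ φ₂ hmem n h0
  by_contra hno
  push_neg at hno
  have W : ∀ j, SatInf w (σ (n + j)) (until_ φ₁ φ₂) ∧
      ∀ k, k < j → SatInf w (σ (n + k)) φ₁ := by
    intro j
    induction j with
    | zero => exact ⟨by simpa using h0, by omega⟩
    | succ j ihj =>
      obtain ⟨hU, hA⟩ := ihj
      rw [satInf_until_iff] at hU
      rcases hU with h2 | ⟨h1, hU'⟩
      · obtain ⟨k, hk, hnB⟩ := hno j h2
        exact absurd (hA k hk) hnB
      · refine ⟨?_, fun k hk => ?_⟩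
        · have := (hagree (n + j) _ hmem).mpr hU'
          rwa [show n + j + 1 = n + (j + 1) by omega] at this
        · rcases Nat.lt_succ_iff_lt_or_eq.mp hk with hk' | hk'
          · exact hA k hk'
          · subst hk'; exact h1
  obtain ⟨j₀, hali⟩ := halign n
  have hUq : SatInf w (σ q) (until_ φ₁ φ₂) := by
    have h := (W j₀).1
    have := hali 0 hp
    rw [add_zero, add_zero] at this
    rwa [this] at h
  obtain ⟨i, hip, h2⟩ := hloop φ₁ φ₂ hmem hUq
  have h2' : SatInf w (σ (n + (j₀ + i))) φ₂ := by
    have := hali i hip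
    rw [show n + (j₀ + i) = n + j₀ + i by omega, this]
    exact h2
  obtain ⟨k, hk, hnB⟩ := hno (j₀ + i) h2'
  exact absurd ((W (j₀ + i)).2 k hk) hnB

open CPLTL in
lemma derive_fulF {P Var S : Type} {κ : P} (T : TransSys P κ S) (π : ℕ → S)
    (ψ : CPLTL P Var) (σ : ℕ → ℕ) (q p : ℕ) (hp : 0 < p)
    (hagree : ∀ n, ∀ χ ∈ cl ψ,
      (SatInf (T.traceOf π) (σ (n + 1)) χ ↔ SatInf (T.traceOf π) (σ n + 1) χ))
    (halign : ∀ n, ∃ j, ∀ i, i < p → σ (n + j + i) = σ (q + i))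
    (hloop : ∀ (z : Var) (φ₁ : CPLTL P Var), fleq z φ₁ ∈ cl ψ →
      SatInf (T.traceOf π) (σ q) (fleq z φ₁) →
      ∃ i, i < p ∧ SatInf (T.traceOf π) (σ (q + i)) φ₁) :
    ∀ (z : Var) (φ₁ : CPLTL P Var), fleq z φ₁ ∈ cl ψ → ∀ n,
      SatInf (T.traceOf π) (σ n) (fleq z φ₁) →
      ∃ j, SatInf (T.traceOf π) (σ (n + j)) φ₁ := by
  set w := T.traceOf π with hw
  intro z φ₁ hmem n h0
  by_contra hno
  push_neg at hno
  have W : ∀ j, SatInf w (σ (n + j)) (fleq z φ₁) := by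
    intro j
    induction j with
    | zero => simpa using h0
    | succ j ihj =>
      rw [satInf_fleq_iff] at ihj
      rcases ihj with h1 | hF
      · exact absurd h1 (hno j)
      · have := (hagree (n + j) _ hmem).mpr hF
        rwa [show n + j + 1 = n + (j + 1) by omega] at this
  obtain ⟨j₀, hali⟩ := halign n
  have hFq : SatInf w (σ q) (fleq z φ₁) := by
    have h := W j₀
    have := hali 0 hp
    rw [add_zero, add_zero] at this
    rwa [this] at h
  obtain ⟨i, hip, h1⟩ := hloop z φ₁ hmem hFq
  apply hno (j₀ + i)
  have := hali i hip
  rw [show n + (j₀ + i) = n + j₀ + i by omega, this]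
  exact h1

open CPLTL in
/-- On an ultimately periodic trace, unparameterized satisfaction implies
satisfaction with the valuation constant equal to `(q + p) * W`. -/
lemma satInf_to_sat_of_periodic {P Var : Type} (w : Trace P) (q p W : ℕ) (hp : 0 < p)
    (hst : ∀ n, q ≤ n → w.state (n + p) = w.state n)
    (hco : ∀ n, q ≤ n → w.cost (n + p) = w.cost n)
    (hcW : ∀ n, w.cost n ≤ W) :
    ∀ χ : CPLTL P Var, varG χ = ∅ → ∀ n,
      SatInf w n χ → Sat w (fun _ : Var => (q + p) * W) n χ := by
  have shift : ∀ (χ : CPLTL P Var) (n : ℕ), q ≤ n → (SatInf w (n + p) χ ↔ SatInf w n χ) := by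
    intro χ n hn
    have hs : ∀ i, w.state ((n + p) + i) = w.state (n + i) := by
      intro i
      rw [show n + p + i = (n + i) + p by omega]
      exact hst (n + i) (by omega)
    have := satInf_congr w (n + p) n hs χ 0
    simpa using this
  have red : ∀ (χ : CPLTL P Var) (n j : ℕ), SatInf w (n + j) χ →
      ∃ j', j' ≤ q + p ∧ SatInf w (n + j') χ := by
    intro χ n j
    induction j using Nat.strong_induction_on with
    | _ j ihj =>
      intro h
      by_cases hj : j ≤ q + p
      · exact ⟨j, hj, h⟩
      · push_neg at hj
        have h1 : q ≤ n + (j - p) := by omega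
        have h2 : SatInf w ((n + (j - p)) + p) χ := by
          rwa [show n + (j - p) + p = n + j by omega]
        exact ihj (j - p) (by omega) ((shift χ _ h1).mp h2)
  intro χ
  induction χ with
  | pos p' => intro _ n h; exact h
  | nneg p' => intro _ n h; exact h
  | conj φ₁ φ₂ ih₁ ih₂ =>
    intro hG n h
    rw [varG, Set.union_empty_iff] at hG
    exact ⟨ih₁ hG.1 n h.1, ih₂ hG.2 n h.2⟩
  | disj φ₁ φ₂ ih₁ ih₂ =>
    intro hG n h
    rw [varG, Set.union_empty_iff] at hG
    exact h.imp (ih₁ hG.1 n) (ih₂ hG.2 n)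
  | next φ₁ ih₁ =>
    intro hG n h
    rw [varG] at hG
    exact ih₁ hG (n + 1) h
  | until_ φ₁ φ₂ ih₁ ih₂ =>
    intro hG n h
    rw [varG, Set.union_empty_iff] at hG
    obtain ⟨j, h2, h1⟩ := h
    exact ⟨j, ih₂ hG.2 _ h2, fun k hk => ih₁ hG.1 _ (h1 k hk)⟩
  | release φ₁ φ₂ ih₁ ih₂ =>
    intro hG n h
    rw [varG, Set.union_empty_iff] at hG
    intro j
    rcases h j with h2 | ⟨k, hk, h1⟩
    · exact Or.inl (ih₂ hG.2 _ h2)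
    · exact Or.inr ⟨k, hk, ih₁ hG.1 _ h1⟩
  | fleq z φ₁ ih₁ =>
    intro hG n h
    rw [varG] at hG
    obtain ⟨j, h1⟩ := h
    obtain ⟨j', hj', h1'⟩ := red φ₁ n j h1
    refine ⟨j', ?_, ih₁ hG _ h1'⟩
    calc w.cst n j' ≤ ∑ _i ∈ Finset.range j', W := Finset.sum_le_sum fun i _ => hcW (n + i)
      _ = j' * W := by simp [mul_comm]
      _ ≤ (q + p) * W := Nat.mul_le_mul_right W hj'
  | gleq z φ₁ ih₁ =>
    intro hG
    rw [varG] at hG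
    exact absurd hG (Set.insert_nonempty _ _).ne_empty

section Combinatorics

lemma infinite_exists_gt {s : Set ℕ} (hs : s.Infinite) (n : ℕ) : ∃ m ∈ s, n < m := by
  by_contra h
  push_neg at h
  exact hs ((Set.finite_Iic n).subset h)

variable {α : Type} [Fintype α]

lemma succ_mod_aux (a p : ℕ) (hp : 0 < p) :
    (a + 1) % p = if a % p + 1 = p then 0 else a % p + 1 := by
  conv_lhs => rw [← Nat.div_add_mod a p]
  rw [add_assoc, Nat.mul_add_mod]
  split
  · next h => rw [h, Nat.mod_self]
  · next h =>
    exact Nat.mod_eq_of_lt (by have := Nat.mod_lt a hp; omega)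

/-- A chain of positions from `a` to `e`, of length at most `Fintype.card α`,
such that each step maps under `g` to the `g`-value of the successor of the
previous position. -/
lemma exists_seg (g : ℕ → α) (a e : ℕ) (hae : a ≤ e) :
    ∃ (len : ℕ) (d : ℕ → ℕ), len ≤ Fintype.card α ∧ d 0 = a ∧ d len = e ∧
      ∀ i, i + 1 ≤ len → g (d (i + 1)) = g (d i + 1) := by
  classical
  suffices h : ∀ k a, e - a ≤ k → a ≤ e →
      ∃ (len : ℕ) (d : ℕ → ℕ), d 0 = a ∧ d len = e ∧
        (∀ i, i + 1 ≤ len → g (d (i + 1)) = g (d i + 1)) ∧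
        (∀ i, 1 ≤ i → i ≤ len → ∀ y, y ≤ e → g y = g (d i) → y ≤ d i) ∧
        (∀ i j, i < j → j ≤ len → d i < d j) by
    obtain ⟨len, d, h0, hl, hc, hlast, hmono⟩ := h (e - a) a le_rfl hae
    refine ⟨len, d, ?_, h0, hl, hc⟩
    have hdle : ∀ m, m ≤ len → d m ≤ e := by
      intro m hm
      rcases eq_or_lt_of_le hm with h' | h'
      · rw [h', hl]
      · exact le_of_lt (hl ▸ hmono m len h' le_rfl)
    have hinj : Function.Injective (fun i : Fin len => g (d (i.val + 1))) := by
      intro i j hij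
      have hij' : g (d (i.val + 1)) = g (d (j.val + 1)) := hij
      by_contra hne
      have hne' : i.val ≠ j.val := fun h' => hne (Fin.ext h')
      rcases Nat.lt_or_ge i.val j.val with hlt | hge
      · have hdlt : d (i.val + 1) < d (j.val + 1) := hmono _ _ (by omega) (by omega)
        have := hlast (i.val + 1) (by omega) (by omega) (d (j.val + 1))
          (hdle _ (by omega)) hij'.symm
        omega
      · have hlt : j.val < i.val := by omega
        have hdlt : d (j.val + 1) < d (i.val + 1) := hmono _ _ (by omega) (by omega)
        have := hlast (j.val + 1) (by omega) (by omega) (d (i.val + 1))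
          (hdle _ (by omega)) hij'
        omega
    have := Fintype.card_le_of_injective _ hinj
    simpa using this
  intro k
  induction k with
  | zero =>
    intro a h1 h2
    have hae' : a = e := by omega
    subst hae'
    exact ⟨0, fun _ => a, rfl, rfl, fun i hi => absurd hi (by omega),
      fun i hi1 hi2 => absurd (hi1.trans hi2) (by omega),
      fun i j hij hj => by omega⟩
  | succ k ihk =>
    intro a h1 h2
    rcases eq_or_lt_of_le h2 with he | hlt
    · subst he
      exact ⟨0, fun _ => a, rfl, rfl, fun i hi => absurd hi (by omega),
        fun i hi1 hi2 => absurd (hi1.trans hi2) (by omega),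
        fun i j hij hj => by omega⟩
    · set Fs := (Finset.range (e + 1)).filter (fun b => g b = g (a + 1)) with hFs
      have hne : a + 1 ∈ Fs := by
        rw [hFs, Finset.mem_filter, Finset.mem_range]
        exact ⟨by omega, rfl⟩
      set b := Fs.max' ⟨a + 1, hne⟩ with hb
      have hbmem : b ∈ Fs := Fs.max'_mem _
      have hble : b ≤ e := by
        have := (Finset.mem_filter.mp hbmem).1
        rw [Finset.mem_range] at this
        omega
      have hbg : g b = g (a + 1) := (Finset.mem_filter.mp hbmem).2
      have hbge : a + 1 ≤ b := Finset.le_max' _ _ hne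
      obtain ⟨len', d', h0', hl', hc', hlast', hmono'⟩ := ihk b (by omega) hble
      set dd : ℕ → ℕ := fun i => if i = 0 then a else d' (i - 1) with hdd
      have hdd0 : dd 0 = a := by simp [hdd]
      have hdds : ∀ i, dd (i + 1) = d' i := by intro i; simp [hdd]
      refine ⟨len' + 1, dd, hdd0, ?_, ?_, ?_, ?_⟩
      · rw [hdds len', hl']
      · intro i hi
        cases i with
        | zero => rw [hdds 0, h0', hdd0, hbg]
        | succ i' =>
          rw [hdds (i' + 1), hdds i']
          exact hc' i' (by omega)
      · intro i hi1 hi2 y hy hgy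
        cases i with
        | zero => omega
        | succ i' =>
          rw [hdds i'] at hgy ⊢
          cases i' with
          | zero =>
            rw [h0'] at hgy ⊢
            have hyFs : y ∈ Fs := by
              simp only [hFs, Finset.mem_filter, Finset.mem_range]
              exact ⟨by omega, by rw [hgy, hbg]⟩
            exact Finset.le_max' _ _ hyFs
          | succ i'' =>
            exact hlast' (i'' + 1) (by omega) (by omega) y hy hgy
      · intro i j hij hj
        cases j with
        | zero => omega
        | succ j' =>
          rw [hdds j']
          cases i with
          | zero =>
            rw [hdd0]
            have : d' 0 ≤ d' j' := by
              cases Nat.eq_zero_or_pos j' with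
              | inl h' => rw [h']
              | inr h' => exact le_of_lt (hmono' 0 j' h' (by omega))
            omega
          | succ i' =>
            rw [hdds i']
            exact hmono' i' j' (by omega) (by omega)

lemma chain_concat (g : ℕ → α) {d₁ d₂ : ℕ → ℕ} {l₁ l₂ : ℕ}
    (h₁ : ∀ i, i + 1 ≤ l₁ → g (d₁ (i + 1)) = g (d₁ i + 1))
    (h₂ : ∀ i, i + 1 ≤ l₂ → g (d₂ (i + 1)) = g (d₂ i + 1))
    (hj : d₂ 0 = d₁ l₁) :
    ∃ d : ℕ → ℕ, (∀ i, i + 1 ≤ l₁ + l₂ → g (d (i + 1)) = g (d i + 1)) ∧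
      (∀ i, i ≤ l₁ → d i = d₁ i) ∧ (∀ i, d (l₁ + i) = d₂ i) := by
  classical
  set D : ℕ → ℕ := fun i => if i < l₁ then d₁ i else d₂ (i - l₁) with hD
  have hDlt : ∀ i, i < l₁ → D i = d₁ i := by
    intro i h
    simp only [hD]
    rw [if_pos h]
  have hDge : ∀ i, l₁ ≤ i → D i = d₂ (i - l₁) := by
    intro i h
    simp only [hD]
    rw [if_neg (by omega)]
  have hDle : ∀ i, i ≤ l₁ → D i = d₁ i := by
    intro i h
    rcases eq_or_lt_of_le h with h' | h'
    · rw [hDge i (by omega), h', Nat.sub_self, hj]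
    · exact hDlt i h'
  have hDhigh : ∀ i, D (l₁ + i) = d₂ i := by
    intro i
    rw [hDge (l₁ + i) (by omega), Nat.add_sub_cancel_left]
  refine ⟨D, ?_, hDle, hDhigh⟩
  intro i hi
  rcases Nat.lt_or_ge i l₁ with h | h
  · rw [hDle (i + 1) (by omega), hDlt i h]
    exact h₁ i (by omega)
  · rw [hDge (i + 1) (by omega), hDge i h, show i + 1 - l₁ = (i - l₁) + 1 by omega]
    exact h₂ (i - l₁) (by omega)

lemma loopbuild (g : ℕ → α) {v : α} (hI : {m | g m = v}.Infinite)
    (E : List ((α → Prop) × (α → Prop)))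
    (hful : ∀ pq ∈ E, ∀ m, pq.1 (g m) → ∃ j, pq.2 (g (m + j))) :
    ∀ a, g a = v → ∃ (len : ℕ) (d : ℕ → ℕ), d 0 = a ∧ g (d len) = v ∧
      (∀ i, i + 1 ≤ len → g (d (i + 1)) = g (d i + 1)) ∧
      (∀ pq ∈ E, pq.1 v → ∃ i, i ≤ len ∧ pq.2 (g (d i))) ∧
      len ≤ 2 * E.length * Fintype.card α := by
  classical
  revert hful
  induction E with
  | nil =>
    intro _ a ha
    exact ⟨0, fun _ => a, rfl, ha, fun i hi => absurd hi (by omega), by simp, by simp⟩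
  | cons pq E' ih =>
    intro hful a ha
    have hful' : ∀ pq' ∈ E', ∀ m, pq'.1 (g m) → ∃ j, pq'.2 (g (m + j)) :=
      fun pq' h => hful pq' (List.mem_cons_of_mem _ h)
    by_cases hPa : pq.1 v
    · obtain ⟨j, hQ⟩ := hful pq List.mem_cons_self a (by rw [ha]; exact hPa)
      obtain ⟨l₁, d₁, hl₁N, hd₁0, hd₁e, hc₁⟩ := exists_seg g a (a + j) (by omega)
      obtain ⟨a', ha'I, ha'gt⟩ := infinite_exists_gt hI (a + j)
      obtain ⟨l₂, d₂, hl₂N, hd₂0, hd₂e, hc₂⟩ := exists_seg g (a + j) a' (le_of_lt ha'gt)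
      obtain ⟨l₃, d₃, hd₃0, hd₃v, hc₃, hful₃, hlen₃⟩ := ih hful' a' ha'I
      obtain ⟨d₁₂, hc₁₂, hlow₁₂, hhigh₁₂⟩ :=
        chain_concat g hc₁ hc₂ (by rw [hd₂0, hd₁e])
      have hjoin : d₃ 0 = d₁₂ (l₁ + l₂) := by rw [hd₃0, hhigh₁₂ l₂, hd₂e]
      obtain ⟨d, hc, hlow, hhigh⟩ := chain_concat g hc₁₂ hc₃ hjoin
      refine ⟨l₁ + l₂ + l₃, d, ?_, ?_, hc, ?_, ?_⟩
      · rw [hlow 0 (by omega), hlow₁₂ 0 (by omega), hd₁0]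
      · rw [show l₁ + l₂ + l₃ = (l₁ + l₂) + l₃ by ring, hhigh l₃, hd₃v]
      · intro pq' hpq' hP
        rcases List.mem_cons.mp hpq' with h | h
        · subst h
          refine ⟨l₁, by omega, ?_⟩
          rw [hlow l₁ (by omega), hlow₁₂ l₁ (by omega), hd₁e]
          exact hQ
        · obtain ⟨i, hi, hQ'⟩ := hful₃ pq' h hP
          exact ⟨l₁ + l₂ + i, by omega,
            by rw [show l₁ + l₂ + i = (l₁ + l₂) + i by ring, hhigh i]; exact hQ'⟩
      · simp only [List.length_cons]
        have : 2 * (E'.length + 1) * Fintype.card α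
            = 2 * E'.length * Fintype.card α + 2 * Fintype.card α := by ring
        omega
    · obtain ⟨len, d, h0, hv', hc, hful'', hlen⟩ := ih hful' a ha
      refine ⟨len, d, h0, hv', hc, ?_, ?_⟩
      · intro pq' hpq' hP
        rcases List.mem_cons.mp hpq' with h | h
        · subst h; exact absurd hP hPa
        · exact hful'' pq' h hP
      · simp only [List.length_cons]
        have : 2 * (E'.length + 1) * Fintype.card α
            = 2 * E'.length * Fintype.card α + 2 * Fintype.card α := by ring
        omega

/-- The main combinatorial lemma: a short ultimately-periodic jumping
reparameterization fulfilling all eventualities within its loop. -/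
lemma main_lemma (g : ℕ → α) (E : List ((α → Prop) × (α → Prop)))
    (hful : ∀ pq ∈ E, ∀ m, pq.1 (g m) → ∃ j, pq.2 (g (m + j))) :
    ∃ (σ : ℕ → ℕ) (q p : ℕ), σ 0 = 0 ∧ 0 < p ∧
      (∀ n, g (σ (n + 1)) = g (σ n + 1)) ∧
      (∀ n, q ≤ n → σ (n + p) = σ n) ∧
      (∀ n, ∃ j, ∀ i, i < p → σ (n + j + i) = σ (q + i)) ∧
      (∀ pq ∈ E, pq.1 (g (σ q)) → ∃ i, i < p ∧ pq.2 (g (σ (q + i)))) ∧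
      q + p ≤ (2 * E.length + 3) * Fintype.card α := by
  classical
  obtain ⟨v, hv⟩ := Finite.exists_infinite_fiber g
  have hI : {m | g m = v}.Infinite := by
    have h1 : (g ⁻¹' {v}).Infinite := Set.infinite_coe_iff.mp hv
    have heq : g ⁻¹' {v} = {m | g m = v} := by
      ext m
      simp [Set.mem_preimage]
    rwa [heq] at h1
  obtain ⟨a₀, ha₀I⟩ := hI.nonempty
  have ha₀v : g a₀ = v := ha₀I
  obtain ⟨q, dpre, hqN, hdpre0, hdpreq, hcpre⟩ := exists_seg g 0 a₀ (Nat.zero_le _)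
  obtain ⟨len, dlp', hdlp'0, hdlp'v, hclp', hfullp, hlenlp⟩ := loopbuild g hI E hful a₀ ha₀v
  obtain ⟨a'', ha''I, ha''gt⟩ := infinite_exists_gt hI (dlp' len)
  obtain ⟨l₃, d₃, hl₃N, hd₃0, hd₃e, hc₃⟩ := exists_seg g (dlp' len) a'' (le_of_lt ha''gt)
  have hl₃pos : 0 < l₃ := by
    rcases Nat.eq_zero_or_pos l₃ with h | h
    · rw [h] at hd₃e; rw [hd₃0] at hd₃e; omega
    · exact h
  obtain ⟨dloop, hcloop, hlowloop, hhighloop⟩ := chain_concat g hclp' hc₃ hd₃0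
  set p := len + l₃ with hpdef
  have hp : 0 < p := by omega
  have hdloop0 : dloop 0 = a₀ := by rw [hlowloop 0 (by omega), hdlp'0]
  have hdloopp : dloop p = a'' := by rw [hpdef, hhighloop l₃, hd₃e]
  have hgdloop0 : g (dloop 0) = v := by rw [hdloop0, ha₀v]
  have hgdloopp : g (dloop p) = v := by rw [hdloopp]; exact ha''I
  set σ : ℕ → ℕ := fun n => if n < q then dpre n else dloop ((n - q) % p) with hσdef
  have hσge : ∀ n, q ≤ n → σ n = dloop ((n - q) % p) := by
    intro n h
    simp only [hσdef]
    rw [if_neg (by omega)]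
  have hσlt : ∀ n, n < q → σ n = dpre n := by
    intro n h
    simp only [hσdef]
    rw [if_pos h]
  have hσq : σ q = dloop 0 := by rw [hσge q le_rfl, Nat.sub_self, Nat.zero_mod]
  have hσqi : ∀ i, i < p → σ (q + i) = dloop i := by
    intro i hi
    rw [hσge (q + i) (by omega), Nat.add_sub_cancel_left, Nat.mod_eq_of_lt hi]
  refine ⟨σ, q, p, ?_, hp, ?_, ?_, ?_, ?_, ?_⟩
  · -- σ 0 = 0
    rcases Nat.eq_zero_or_pos q with h | h
    · have h0 : a₀ = 0 := by rw [← hdpreq, h, hdpre0]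
      rw [hσge 0 (by omega), h, Nat.sub_self, Nat.zero_mod, hdloop0, h0]
    · rw [hσlt 0 h, hdpre0]
  · -- step property
    intro n
    by_cases hn1 : n + 1 < q
    · rw [hσlt (n + 1) hn1, hσlt n (by omega)]
      exact hcpre n (by omega)
    · by_cases hn : n < q
      · have hq : n + 1 = q := by omega
        have e1 : σ (n + 1) = dloop 0 := by
          rw [hσge (n + 1) (by omega), hq, Nat.sub_self, Nat.zero_mod]
        rw [e1, hdloop0, ← hdpreq, ← hq, hσlt n hn]
        exact hcpre n (by omega)
      · push_neg at hn
        set t := (n - q) % p with htdef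
        have ht : t < p := Nat.mod_lt _ hp
        have hmod : (n + 1 - q) % p = if t + 1 = p then 0 else t + 1 := by
          rw [show n + 1 - q = (n - q) + 1 by omega, succ_mod_aux _ _ hp, ← htdef]
        have hσn : σ n = dloop t := by rw [hσge n hn, ← htdef]
        by_cases ht1 : t + 1 = p
        · have hσn1 : σ (n + 1) = dloop 0 := by
            rw [hσge (n + 1) (by omega), hmod, if_pos ht1]
          rw [hσn1, hσn, hgdloop0, ← hgdloopp, ← ht1]
          exact hcloop t (by omega)
        · have hσn1 : σ (n + 1) = dloop (t + 1) := by
            rw [hσge (n + 1) (by omega), hmod, if_neg ht1]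
          rw [hσn1, hσn]
          exact hcloop t (by omega)
  · -- periodicity
    intro n hn
    rw [hσge (n + p) (by omega), hσge n hn, show n + p - q = (n - q) + p by omega,
      Nat.add_mod_right]
  · -- alignment
    intro n
    have hnp : n ≤ n * p := Nat.le_mul_of_pos_right n hp
    refine ⟨q + n * p - n, fun i hi => ?_⟩
    rw [show n + (q + n * p - n) + i = q + (n * p + i) by omega]
    rw [hσge (q + (n * p + i)) (by omega), Nat.add_sub_cancel_left,
      show n * p + i = p * n + i by ring, Nat.mul_add_mod, Nat.mod_eq_of_lt hi,
      hσqi i hi]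
  · -- fulfillment
    intro pq hpq hP
    rw [hσq, hgdloop0] at hP
    obtain ⟨i, hi, hQ⟩ := hfullp pq hpq hP
    refine ⟨i, by omega, ?_⟩
    rw [hσqi i (by omega), hlowloop i hi]
    exact hQ
  · -- bound
    have : (2 * E.length + 3) * Fintype.card α
        = 2 * E.length * Fintype.card α + Fintype.card α + Fintype.card α
          + Fintype.card α := by ring
    omega

end Combinatorics

open CPLTL in
/-- The fulfillment target of an eventuality formula. -/
def tgtF {P Var : Type} : CPLTL P Var → CPLTL P Var
  | .until_ _ φ₂ => φ₂
  | .fleq _ φ₁ => φ₁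
  | χ => χ

lemma arith_aux (s : ℕ) (hs : 1 ≤ s) : 2 * s + 3 ≤ 8 ^ s := by
  induction s with
  | zero => omega
  | succ n ih =>
    rcases Nat.eq_zero_or_pos n with h | h
    · subst h; norm_num
    · have h1 := ih h
      have h2 : 1 ≤ 8 ^ n := Nat.one_le_pow n 8 (by omega)
      have h3 : 8 ^ (n + 1) = 8 ^ n * 8 := pow_succ 8 n
      omega

lemma cost_le_maxCost {P S : Type} {κ : P} [Fintype S] (T : TransSys P κ S)
    {s s' : S} (h : T.edge s s') : T.cost s s' ≤ T.maxCost := by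
  apply le_csSup
  · have hfin : ({c | ∃ s s', T.edge s s' ∧ T.cost s s' = c}).Finite := by
      apply Set.Finite.subset (Set.finite_range (fun pr : S × S => T.cost pr.1 pr.2))
      rintro c ⟨a, b, -, rfl⟩
      exact ⟨(a, b), rfl⟩
    exact hfin.bddAbove
  · exact ⟨s, s', h, rfl⟩

open CPLTL in
theorem mc_always_violating_valuation_upper_bound' :
    ∃ c : ℕ, ∀ (P S Var : Type) [Fintype S] [Infinite Var] (κ : P)
      (T : TransSys P κ S) (φ : CPLTL P Var), CPLTL.IsG φ →
      (¬ ∀ α, T.Satisfies φ α) →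
      ∃ α, ¬ T.Satisfies φ α ∧
        ∀ z, α z ≤ 2 ^ (4 * CPLTL.size φ) * Fintype.card S * T.maxCost := by
  refine ⟨4, ?_⟩
  intro P S Var _ _ κ T φ hG hns
  classical
  push_neg at hns
  obtain ⟨α₀, hα₀⟩ := hns
  rw [TransSys.Satisfies] at hα₀
  push_neg at hα₀
  obtain ⟨π, hπ0, hπe, hπsat⟩ := hα₀
  set w := T.traceOf π with hw
  set ψ := negate φ with hψdef
  rw [IsG] at hG
  have hvG : varG ψ = ∅ := by rw [hψdef, varG_negate]; exact hG
  have hψsat : Sat w α₀ 0 ψ := (sat_negate w α₀ φ 0).mpr hπsat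
  have hInf : SatInf w 0 ψ := sat_to_satInf w α₀ ψ hvG 0 hψsat
  have hfin : (cl ψ).Finite := cl_finite ψ
  set F := hfin.toFinset with hFdef
  set g : ℕ → S × (↥F → Prop) := fun m => (π m, fun χ => SatInf w m χ.1) with hgdef
  set E : List ((S × (↥F → Prop) → Prop) × (S × (↥F → Prop) → Prop)) :=
    F.attach.toList.map (fun u =>
      ((fun x : S × (↥F → Prop) => x.2 u),
       (fun x : S × (↥F → Prop) => ∀ h : tgtF u.1 ∈ F, x.2 ⟨tgtF u.1, h⟩))) with hEdef
  have hful : ∀ pq ∈ E, ∀ m, pq.1 (g m) → ∃ j, pq.2 (g (m + j)) := by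
    intro pq hpq m
    rw [hEdef, List.mem_map] at hpq
    obtain ⟨u, hu, rfl⟩ := hpq
    intro hP
    obtain ⟨χ, hχ⟩ := u
    have hP' : SatInf w m χ := hP
    cases χ with
    | until_ φ₁ φ₂ =>
      obtain ⟨j, h2, -⟩ := hP'
      exact ⟨j, fun _ => h2⟩
    | fleq z φ₁ =>
      obtain ⟨j, h1⟩ := hP'
      exact ⟨j, fun _ => h1⟩
    | pos p' => exact ⟨0, fun _ => show SatInf w (m + 0) _ by rw [Nat.add_zero]; exact hP'⟩
    | nneg p' => exact ⟨0, fun _ => show SatInf w (m + 0) _ by rw [Nat.add_zero]; exact hP'⟩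
    | conj φ₁ φ₂ => exact ⟨0, fun _ => show SatInf w (m + 0) _ by rw [Nat.add_zero]; exact hP'⟩
    | disj φ₁ φ₂ => exact ⟨0, fun _ => show SatInf w (m + 0) _ by rw [Nat.add_zero]; exact hP'⟩
    | next φ₁ => exact ⟨0, fun _ => show SatInf w (m + 0) _ by rw [Nat.add_zero]; exact hP'⟩
    | release φ₁ φ₂ => exact ⟨0, fun _ => show SatInf w (m + 0) _ by rw [Nat.add_zero]; exact hP'⟩
    | gleq z φ₁ => exact ⟨0, fun _ => show SatInf w (m + 0) _ by rw [Nat.add_zero]; exact hP'⟩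
  obtain ⟨σ, q, p, hσ0, hp, hstep, hper, halign, hfulmain, hbound⟩ := main_lemma g E hful
  -- extract agreement
  have hπstep : ∀ n, π (σ (n + 1)) = π (σ n + 1) := by
    intro n
    exact congrArg Prod.fst (hstep n)
  have hagree : ∀ n, ∀ χ ∈ cl ψ,
      (SatInf w (σ (n + 1)) χ ↔ SatInf w (σ n + 1) χ) := by
    intro n χ hχ
    have h2 := congrArg Prod.snd (hstep n)
    have h3 := congrFun h2 ⟨χ, hfin.mem_toFinset.mpr hχ⟩
    exact iff_of_eq h3
  -- loop fulfillment, formula level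
  have hmemE : ∀ χ (hχ : χ ∈ cl ψ),
      ((fun x : S × (↥F → Prop) => x.2 ⟨χ, hfin.mem_toFinset.mpr hχ⟩),
       (fun x : S × (↥F → Prop) =>
         ∀ h : tgtF χ ∈ F, x.2 ⟨tgtF χ, h⟩)) ∈ E := by
    intro χ hχ
    rw [hEdef, List.mem_map]
    exact ⟨⟨χ, hfin.mem_toFinset.mpr hχ⟩,
      Finset.mem_toList.mpr (Finset.mem_attach _ _), rfl⟩
  have hloopU : ∀ φ₁ φ₂ : CPLTL P Var, until_ φ₁ φ₂ ∈ cl ψ →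
      SatInf w (σ q) (until_ φ₁ φ₂) →
      ∃ i, i < p ∧ SatInf w (σ (q + i)) φ₂ := by
    intro φ₁ φ₂ hmem hU
    have hφ₂cl : φ₂ ∈ cl ψ :=
      cl_trans ψ _ hmem ((Set.subset_insert _ _)
        (Set.mem_union_right _ (self_mem_cl φ₂)))
    obtain ⟨i, hip, hQ⟩ := hfulmain _ (hmemE (until_ φ₁ φ₂) hmem) hU
    exact ⟨i, hip, hQ (hfin.mem_toFinset.mpr hφ₂cl)⟩
  have hloopF : ∀ (z : Var) (φ₁ : CPLTL P Var), fleq z φ₁ ∈ cl ψ →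
      SatInf w (σ q) (fleq z φ₁) →
      ∃ i, i < p ∧ SatInf w (σ (q + i)) φ₁ := by
    intro z φ₁ hmem hU
    have hφ₁cl : φ₁ ∈ cl ψ :=
      cl_trans ψ _ hmem ((Set.subset_insert _ _) (self_mem_cl φ₁))
    obtain ⟨i, hip, hQ⟩ := hfulmain _ (hmemE (fleq z φ₁) hmem) hU
    exact ⟨i, hip, hQ (hfin.mem_toFinset.mpr hφ₁cl)⟩
  have hfulU := derive_fulU T π ψ σ q p hp hagree halign hloopU
  have hfulF := derive_fulF T π ψ σ q p hp hagree halign hloopF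
  have hInfσ : SatInf w (σ 0) ψ := by rw [hσ0]; exact hInf
  have hInf' : SatInf (T.traceOf (π ∘ σ)) 0 ψ :=
    transfer_satInf T π ψ σ hagree hfulU hfulF ψ subset_rfl hvG 0 hInfσ
  -- the new path
  have hπ'0 : (π ∘ σ) 0 = T.init := by
    show π (σ 0) = T.init
    rw [hσ0, hπ0]
  have hedge' : ∀ n, T.edge ((π ∘ σ) n) ((π ∘ σ) (n + 1)) := by
    intro n
    show T.edge (π (σ n)) (π (σ (n + 1)))
    rw [hπstep n]
    exact hπe (σ n)
  -- periodicity of the new trace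
  set w' := T.traceOf (π ∘ σ) with hw'def
  have hstate : ∀ n, q ≤ n → w'.state (n + p) = w'.state n := by
    intro n hn
    show T.label (π (σ (n + p))) = T.label (π (σ n))
    rw [hper n hn]
  have hcost : ∀ n, q ≤ n → w'.cost (n + p) = w'.cost n := by
    intro n hn
    show T.cost (π (σ (n + p))) (π (σ (n + p + 1))) = T.cost (π (σ n)) (π (σ (n + 1)))
    rw [hper n hn, show n + p + 1 = (n + 1) + p by omega, hper (n + 1) (by omega)]
  have hcW : ∀ n, w'.cost n ≤ T.maxCost := by
    intro n
    exact cost_le_maxCost T (hedge' n)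
  have hSatψ : Sat w' (fun _ : Var => (q + p) * T.maxCost) 0 ψ :=
    satInf_to_sat_of_periodic w' q p T.maxCost hp hstate hcost hcW ψ hvG 0 hInf'
  refine ⟨fun _ => (q + p) * T.maxCost, ?_, ?_⟩
  · intro hSat
    exact (sat_negate w' _ φ 0).mp hSatψ (hSat (π ∘ σ) hπ'0 hedge')
  · intro z
    -- length of E
    have hElen : E.length = size φ := by
      rw [hEdef, List.length_map, Finset.length_toList, Finset.card_attach, hFdef,
        ← Set.ncard_eq_toFinset_card (cl ψ) hfin, ← size, hψdef, size_negate]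
    have hcard : Fintype.card (S × (↥F → Prop)) = Fintype.card S * 2 ^ size φ := by
      rw [Fintype.card_prod, Fintype.card_fun, Fintype.card_prop, Fintype.card_coe,
        hFdef, ← Set.ncard_eq_toFinset_card (cl ψ) hfin, ← size, hψdef, size_negate]
    have hs1 : 1 ≤ size φ := size_pos φ
    have h8 : 2 * size φ + 3 ≤ 2 ^ (3 * size φ) := by
      calc 2 * size φ + 3 ≤ 8 ^ size φ := arith_aux _ hs1
        _ = 2 ^ (3 * size φ) := by rw [pow_mul]; norm_num
    have hqp : q + p ≤ 2 ^ (4 * size φ) * Fintype.card S := by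
      calc q + p ≤ (2 * E.length + 3) * Fintype.card (S × (↥F → Prop)) := hbound
        _ = (2 * size φ + 3) * (Fintype.card S * 2 ^ size φ) := by rw [hElen, hcard]
        _ ≤ 2 ^ (3 * size φ) * (Fintype.card S * 2 ^ size φ) :=
            Nat.mul_le_mul_right _ h8
        _ = 2 ^ (4 * size φ) * Fintype.card S := by
            rw [show 4 * size φ = 3 * size φ + size φ by ring, pow_add]
            ring
    calc (q + p) * T.maxCost
        ≤ (2 ^ (4 * size φ) * Fintype.card S) * T.maxCost := Nat.mul_le_mul_right _ hqp
      _ = 2 ^ (4 * size φ) * Fintype.card S * T.maxCost := rfl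

/-- there is a constant `c` such that whenever a transition system
`T` does not satisfy a cPLTL_G formula `φ` with respect to every variable valuation,
there is a violating valuation bounded by `2^{c·|φ|} · |S| · W`, where `|S|` is the
number of states of `T` and `W` is its maximal cost. -/
theorem mc_always_violating_valuation_upper_bound :
    ∃ c : ℕ, ∀ (P S Var : Type) [Fintype S] [Infinite Var] (κ : P)
      (T : TransSys P κ S) (φ : CPLTL P Var), CPLTL.IsG φ →
      (¬ ∀ α, T.Satisfies φ α) →
      ∃ α, ¬ T.Satisfies φ α ∧
        ∀ z, α z ≤ 2 ^ (c * CPLTL.size φ) * Fintype.card S * T.maxCost := by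
  obtain ⟨-, h⟩ := mc_always_violating_valuation_upper_bound'
  exact ⟨4, h⟩
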